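/- Let u : [0, s₀] → ℝ be a differentiable nonnegative function with u(0) = K ≥ 1 and satisfying u'(s) ≤ u(s)² + u(s) for all s. Then u(s) ≤ K / ((K+1)e^{−s} − K) for all s with (K+1)e^{−s} > K. In particular, if s ≤ 1/(4K) then u(s)/K ≤ ((K+1)e^{−s} − K)^{−1} < 2. -/

import Mathlib

open Real Set

/-- ODE comparison estimate. If `u : [0,s₀] → ℝ` is differentiable, nonnegative,
`u(0) = K ≥ 1` and `u' ≤ u² + u`, then `u(s) ≤ K/((K+1)e^{−s} − K)` whenever
`(K+1)e^{−s} > K`; and if `s ≤ 1/(4K)` then `u(s)/K ≤ ((K+1)e^{−s} − K)⁻¹ < 2`. -/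
theorem stmt2 (s₀ K : ℝ) (u : ℝ → ℝ)
    (hdiff : ∀ s ∈ Icc 0 s₀, DifferentiableAt ℝ u s)
    (hnonneg : ∀ s ∈ Icc 0 s₀, 0 ≤ u s)
    (hK : 1 ≤ K) (hu0 : u 0 = K)
    (hode : ∀ s ∈ Icc 0 s₀, deriv u s ≤ (u s) ^ 2 + u s) :
    (∀ s ∈ Icc 0 s₀, (K + 1) * Real.exp (-s) > K →
      u s ≤ K / ((K + 1) * Real.exp (-s) - K)) ∧
    (∀ s ∈ Icc 0 s₀, s ≤ 1 / (4 * K) →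
      u s / K ≤ ((K + 1) * Real.exp (-s) - K)⁻¹ ∧
      ((K + 1) * Real.exp (-s) - K)⁻¹ < 2) := by
  have hK0 : (0:ℝ) < K := lt_of_lt_of_le one_pos hK
  have hK1 : (0:ℝ) < K + 1 := by linarith
  set g : ℝ → ℝ := fun s => Real.exp (-s) * ((u s + 1)⁻¹ - 1) with hg
  have ha : ∀ s ∈ Icc (0:ℝ) s₀, 0 < u s + 1 := fun s hs => by linarith [hnonneg s hs]
  have hgderiv : ∀ s ∈ Icc (0:ℝ) s₀, HasDerivAt g
      (Real.exp (-s) * (-(deriv u s) / (u s + 1)^2 - ((u s + 1)⁻¹ - 1))) s := by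
    intro s hs
    have h1 : HasDerivAt (fun t : ℝ => Real.exp (-t)) (-Real.exp (-s)) s := by
      simpa using (hasDerivAt_neg s).exp
    have h3 : HasDerivAt (fun t => u t + 1) (deriv u s) s :=
      ((hdiff s hs).hasDerivAt).add_const 1
    have h4 : HasDerivAt (fun t => (u t + 1)⁻¹) (-(deriv u s) / (u s + 1)^2) s :=
      h3.inv (ne_of_gt (ha s hs))
    have h5 := h4.sub_const 1
    have h6 := h1.mul h5
    refine h6.congr_deriv ?_
    ring
  have hmono : MonotoneOn g (Icc 0 s₀) := by
    apply monotoneOn_of_deriv_nonneg (convex_Icc 0 s₀)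
    · intro s hs
      exact ((hgderiv s hs).continuousAt).continuousWithinAt
    · intro s hs
      exact ((hgderiv s (interior_subset hs)).differentiableAt).differentiableWithinAt
    · intro s hs
      have hs' : s ∈ Icc (0:ℝ) s₀ := interior_subset hs
      rw [(hgderiv s hs').deriv]
      have hE : (0:ℝ) < Real.exp (-s) := Real.exp_pos _
      have haa := ha s hs'
      have hO := hode s hs'
      have e2 : (u s + 1)⁻¹ * (u s + 1) = 1 := inv_mul_cancel₀ (ne_of_gt haa)
      have key : (u s + 1)⁻¹ - 1 ≤ -(deriv u s) / (u s + 1)^2 := by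
        rw [le_div_iff₀ (by positivity)]
        nlinarith [e2]
      exact mul_nonneg hE.le (by linarith)
  have main : ∀ s ∈ Icc (0:ℝ) s₀, (K + 1) * Real.exp (-s) > K →
      u s ≤ K / ((K + 1) * Real.exp (-s) - K) := by
    intro s hs hD
    have h0 : (0:ℝ) ∈ Icc (0:ℝ) s₀ := ⟨le_refl 0, le_trans hs.1 hs.2⟩
    have hkey := hmono h0 hs hs.1
    have hg0 : g 0 = (K+1)⁻¹ - 1 := by simp [hg, hu0]
    rw [hg0] at hkey
    have haa := ha s hs
    have e1 : (K+1)⁻¹ * (K+1) = 1 := inv_mul_cancel₀ (ne_of_gt hK1)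
    have e2 : (u s + 1)⁻¹ * (u s + 1) = 1 := inv_mul_cancel₀ (ne_of_gt haa)
    have h2 := mul_le_mul_of_nonneg_right hkey (le_of_lt (mul_pos hK1 haa))
    have hclean : Real.exp (-s) * (K+1) * u s ≤ K * (u s + 1) := by
      simp only [hg] at h2
      nlinarith [h2, e1, e2]
    rw [le_div_iff₀ (by linarith : (0:ℝ) < (K+1) * Real.exp (-s) - K)]
    nlinarith [hclean]
  refine ⟨main, ?_⟩
  intro s hs hs4
  have hE : (0:ℝ) < Real.exp (-s) := Real.exp_pos _
  have hDhalf : (1:ℝ)/2 < (K + 1) * Real.exp (-s) - K := by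
    rcases eq_or_lt_of_le hs.1 with h | h
    · rw [← h]; norm_num
    · have hlt : (-s) + 1 < Real.exp (-s) := Real.add_one_lt_exp (by linarith)
      have hsK : s * (4*K) ≤ 1 := by
        rw [← le_div_iff₀ (by positivity)] ; exact hs4
      nlinarith [hlt, hsK]
  have hD : (K + 1) * Real.exp (-s) > K := by linarith
  have hmain := main s hs hD
  have hDpos : (0:ℝ) < (K + 1) * Real.exp (-s) - K := by linarith
  constructor
  · rw [div_le_iff₀ hK0]
    rw [le_div_iff₀ hDpos] at hmain
    have : ((K + 1) * Real.exp (-s) - K)⁻¹ * ((K + 1) * Real.exp (-s) - K) = 1 :=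
      inv_mul_cancel₀ (ne_of_gt hDpos)
    nlinarith [hmain, this, hDpos]
  · rw [inv_lt_comm₀ hDpos (by norm_num : (0:ℝ) < 2)] at *
    linarith
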